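/- Let a, b, j, r be integers with 1 < a ≤ b, j ≥ a, and r ≥ 0. Then for every abelian group A and every function W from partitions to A: ∑_{λ : 1^{j−a}·a·b^r ≤ λ} W(m(λ)) − ∑_{λ : 1^{j}·b^r ≤ λ} W(m(λ)) = ∑_{λ : (1,0)^{j−a}·(a,0)·(0,1)^r ≤ λ} W(m(λ)) − ∑_{λ : (1,0)^{j}·(0,1)^r ≤ λ} W(m(λ)), where the first two sums run over the finitely many multisets of positive integers above the indicated multiset in the refinement order, and the last two sums run over the finitely many multisets of nonzero elements of the commutative monoid ℕ×ℕ above the indicated multiset in the refinement order. (This is Lemma 5.21 of the paper, ǀw̄_{1^{j−a}ab^r} = w̄_{1^j b^r} − w̄_{x^j y^r} + w̄_{x^{j−a}(ax)y^r}ǀ, stated for an arbitrary function W of multiplicity partitions, which is what the paper's bijective proof establishes.) -/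

import Mathlib

/-- An elementary merge replaces two elements `x`, `y` of a multiset by the single
element `x + y`. -/
def ElemMerge {M : Type*} [AddCommMonoid M] (μ ν : Multiset M) : Prop :=
  ∃ (x y : M) (rest : Multiset M), μ = x ::ₘ y ::ₘ rest ∧ ν = (x + y) ::ₘ rest

/-- The refinement order: `Refines μ λ` iff `λ` can be obtained from `μ` by a finite
(possibly empty) sequence of elementary merges. -/
def Refines {M : Type*} [AddCommMonoid M] : Multiset M → Multiset M → Prop :=
  Relation.ReflTransGen ElemMerge

/-- The multiplicity partition `m(λ)`: the finite multiset of multiplicities with which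
the distinct elements of `λ` occur. -/
noncomputable def multPartition {M : Type*} (lam : Multiset M) : Multiset ℕ :=
  letI := Classical.decEq M
  lam.dedup.map fun x => lam.count x

section generic
variable {M N : Type*} [AddCommMonoid M] [AddCommMonoid N]

lemma ElemMerge.add_right {μ ν : Multiset M} (h : ElemMerge μ ν) (s : Multiset M) :
    ElemMerge (μ + s) (ν + s) := by
  obtain ⟨x, y, rest, rfl, rfl⟩ := h
  exact ⟨x, y, rest + s, by simp [Multiset.cons_add], by simp [Multiset.cons_add]⟩

lemma Refines.refl' (μ : Multiset M) : Refines μ μ := Relation.ReflTransGen.refl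

lemma Refines.trans' {μ ν l : Multiset M} (h1 : Refines μ ν) (h2 : Refines ν l) :
    Refines μ l := Relation.ReflTransGen.trans h1 h2

lemma Refines.ind {μ : Multiset M} {motive : Multiset M → Prop} (h0 : motive μ)
    (step : ∀ ν x y rest, motive (x ::ₘ y ::ₘ rest) → ν = (x + y) ::ₘ rest → motive ν)
    {l : Multiset M} (h : Refines μ l) : motive l := by
  induction h with
  | refl => exact h0
  | tail _ h ih =>
    obtain ⟨x, y, rest, h1, h2⟩ := h
    exact step _ x y rest (h1 ▸ ih) h2

lemma Refines.add {μ1 μ2 l1 l2 : Multiset M} (h1 : Refines μ1 l1) (h2 : Refines μ2 l2) :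
    Refines (μ1 + μ2) (l1 + l2) := by
  have H : ∀ (s : Multiset M) {μ l : Multiset M}, Refines μ l → Refines (μ + s) (l + s) := by
    intro s μ l h
    induction h with
    | refl => exact .refl
    | tail _ h ih => exact ih.tail (h.add_right s)
  have h1' : Refines (μ1 + μ2) (l1 + μ2) := H μ2 h1
  have h2' : Refines (l1 + μ2) (l1 + l2) := by
    rw [add_comm l1 μ2, add_comm l1 l2]; exact H l1 h2
  exact h1'.trans h2'

lemma Refines.sum_eq {μ l : Multiset M} (h : Refines μ l) : l.sum = μ.sum := by
  induction h with
  | refl => rfl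
  | tail _ h ih =>
    obtain ⟨x, y, rest, rfl, rfl⟩ := h
    simp only [Multiset.sum_cons] at ih ⊢
    rw [← ih, add_assoc]

lemma Refines.card_le {μ l : Multiset M} (h : Refines μ l) :
    Multiset.card l ≤ Multiset.card μ := by
  induction h with
  | refl => exact le_rfl
  | tail _ h ih =>
    obtain ⟨x, y, rest, rfl, rfl⟩ := h
    simp at ih ⊢; omega

lemma refines_sum_singleton {μ : Multiset M} (h : μ ≠ 0) : Refines μ ({μ.sum} : Multiset M) := by
  induction μ using Multiset.induction with
  | empty => exact absurd rfl h
  | cons x s ih =>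
    rcases eq_or_ne s 0 with rfl | hs
    · simp only [Multiset.sum_cons, Multiset.sum_zero, add_zero]
      exact .refl
    · have h1 : Refines (x ::ₘ s) (x ::ₘ {s.sum}) := by
        have := Refines.add (show Refines ({x} : Multiset M) {x} from .refl) (ih hs)
        simpa [Multiset.singleton_add] using this
      refine h1.tail ⟨x, s.sum, 0, by simp, by simp⟩

lemma refines_map (f : M →+ N) {μ l : Multiset M} (h : Refines μ l) :
    Refines (μ.map f) (l.map f) := by
  induction h with
  | refl => exact .refl
  | tail _ h ih =>
    obtain ⟨x, y, rest, rfl, rfl⟩ := h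
    exact ih.tail ⟨f x, f y, rest.map f, by simp, by simp⟩

lemma refines_lift (f : M →+ N) {μ : Multiset M} {l : Multiset N}
    (h : Refines (μ.map f) l) : ∃ l', Refines μ l' ∧ l'.map f = l := by
  classical
  generalize hν : μ.map f = ν at h
  induction h with
  | refl => exact ⟨μ, .refl, hν⟩
  | tail _ h ih =>
    obtain ⟨l', hl', rfl⟩ := ih
    obtain ⟨x, y, rest, hxy, rfl⟩ := h
    have hx : x ∈ l'.map f := by rw [hxy]; exact Multiset.mem_cons_self _ _
    obtain ⟨x', hx', rfl⟩ := Multiset.mem_map.1 hx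
    have h1 : l' = x' ::ₘ l'.erase x' := (Multiset.cons_erase hx').symm
    have h2 : (l'.erase x').map f = y ::ₘ rest := by
      have := hxy
      rw [h1, Multiset.map_cons] at this
      exact (Multiset.cons_inj_right _).1 this
    have hy : y ∈ (l'.erase x').map f := by rw [h2]; exact Multiset.mem_cons_self _ _
    obtain ⟨y', hy', rfl⟩ := Multiset.mem_map.1 hy
    have h3 : l'.erase x' = y' ::ₘ (l'.erase x').erase y' := (Multiset.cons_erase hy').symm
    have h4 : ((l'.erase x').erase y').map f = rest := by
      have := h2
      rw [h3, Multiset.map_cons] at this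
      exact (Multiset.cons_inj_right _).1 this
    refine ⟨(x' + y') ::ₘ (l'.erase x').erase y', ?_, by simp [h4]⟩
    refine hl'.tail ⟨x', y', (l'.erase x').erase y', by rw [← h3]; exact h1, rfl⟩

lemma Refines.not_zero_mem {M : Type*} [AddCommMonoid M] [PartialOrder M] [CanonicallyOrderedAdd M]
    {μ l : Multiset M} (h : Refines μ l) (hμ : (0 : M) ∉ μ) : (0 : M) ∉ l := by
  induction h with
  | refl => exact hμ
  | tail _ h ih =>
    obtain ⟨x, y, rest, rfl, rfl⟩ := h
    intro hc
    rcases Multiset.mem_cons.1 hc with hc | hc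
    · have : x = 0 ∧ y = 0 := add_eq_zero.1 hc.symm
      exact ih (by simp [← this.1])
    · exact ih (by simp [hc])

end generic
section pairs
open Multiset

lemma sumFst (l : Multiset (ℕ × ℕ)) : l.sum.1 = (l.map (fun e => e.1)).sum := by
  induction l using Multiset.induction with
  | empty => simp
  | cons x t ih => simp [ih]

lemma sumSnd (l : Multiset (ℕ × ℕ)) : l.sum.2 = (l.map (fun e => e.2)).sum := by
  induction l using Multiset.induction with
  | empty => simp
  | cons x t ih => simp [ih]

lemma Refines.exists_fst_ge {a : ℕ} {μ l : Multiset (ℕ × ℕ)} (h : Refines μ l)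
    (hμ : ∃ e ∈ μ, a ≤ e.1) : ∃ e ∈ l, a ≤ e.1 := by
  refine Refines.ind (motive := fun l => ∃ e ∈ l, a ≤ e.1) hμ ?_ h
  rintro ν x y rest ⟨e, he, hae⟩ rfl
  rcases Multiset.mem_cons.1 he with rfl | he'
  · exact ⟨e + y, Multiset.mem_cons_self _ _, le_trans hae (by simp [Prod.fst_add])⟩
  · rcases Multiset.mem_cons.1 he' with rfl | he''
    · exact ⟨x + e, Multiset.mem_cons_self _ _, le_trans hae (by simp [Prod.fst_add])⟩
    · exact ⟨e, Multiset.mem_cons_of_mem he'', hae⟩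

lemma refines_gen {l : Multiset (ℕ × ℕ)} (h0 : (0 : ℕ × ℕ) ∉ l) :
    Refines (Multiset.replicate l.sum.1 (1,0) + Multiset.replicate l.sum.2 (0,1)) l := by
  induction l using Multiset.induction with
  | empty => simpa using Refines.refl' 0
  | cons e t ih =>
    have h0t : (0 : ℕ × ℕ) ∉ t := fun h => h0 (Multiset.mem_cons_of_mem h)
    have h0e : e ≠ 0 := fun h => h0 (h ▸ Multiset.mem_cons_self _ _)
    have hsum : (e ::ₘ t).sum = (e.1 + t.sum.1, e.2 + t.sum.2) := by
      simp [Multiset.sum_cons, Prod.ext_iff]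
    have h1 : Refines (Multiset.replicate e.1 (1,0) + Multiset.replicate e.2 (0,1)) {e} := by
      have hne : Multiset.replicate e.1 (1,0) + Multiset.replicate e.2 (0,1) ≠ 0 := by
        intro h
        have := congrArg Multiset.card h
        simp at this
        exact h0e (Prod.ext this.1 this.2)
      have hs : (Multiset.replicate e.1 (1,0) + Multiset.replicate e.2 (0,1)).sum = e := by
        simp [Multiset.sum_replicate, Prod.ext_iff]
      have := refines_sum_singleton hne
      rwa [hs] at this
    have h2 := h1.add (ih h0t)
    rw [hsum]
    rw [Multiset.replicate_add, Multiset.replicate_add]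
    have heq : Multiset.replicate e.1 (1,0) + Multiset.replicate t.sum.1 (1,0) +
        (Multiset.replicate e.2 (0,1) + Multiset.replicate t.sum.2 (0,1)) =
        (Multiset.replicate e.1 (1,0) + Multiset.replicate e.2 (0,1)) +
        (Multiset.replicate t.sum.1 (1,0) + Multiset.replicate t.sum.2 (0,1)) := by
      abel
    rw [heq]
    simpa [Multiset.singleton_add] using h2

lemma refines_xy_iff {j r : ℕ} {l : Multiset (ℕ × ℕ)} :
    Refines (Multiset.replicate j (1,0) + Multiset.replicate r (0,1)) l ↔
      (0 : ℕ × ℕ) ∉ l ∧ l.sum = (j, r) := by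
  constructor
  · intro h
    refine ⟨h.not_zero_mem ?_, ?_⟩
    · intro hc
      rcases Multiset.mem_add.1 hc with hc | hc <;>
        exact absurd (Multiset.eq_of_mem_replicate hc) (by simp [Prod.ext_iff])
    · rw [h.sum_eq]; simp [Multiset.sum_replicate, Prod.ext_iff]
  · rintro ⟨h0, hs⟩
    have := refines_gen h0
    rwa [hs] at this

lemma refines_axy_iff {a j r : ℕ} (ha : 0 < a) (hj : a ≤ j) {l : Multiset (ℕ × ℕ)} :
    Refines (Multiset.replicate (j - a) (1,0) + ((a, 0) ::ₘ Multiset.replicate r (0,1))) l ↔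
      (0 : ℕ × ℕ) ∉ l ∧ l.sum = (j, r) ∧ ∃ e ∈ l, a ≤ e.1 := by
  constructor
  · intro h
    refine ⟨h.not_zero_mem ?_, ?_, h.exists_fst_ge ⟨(a,0), ?_, le_rfl⟩⟩
    · intro hc
      rcases Multiset.mem_add.1 hc with hc | hc
      · exact absurd (Multiset.eq_of_mem_replicate hc) (by simp [Prod.ext_iff])
      · rcases Multiset.mem_cons.1 hc with hc | hc
        · exact absurd hc (by simp [Prod.ext_iff]; omega)
        · exact absurd (Multiset.eq_of_mem_replicate hc) (by simp [Prod.ext_iff])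
    · rw [h.sum_eq]
      simp [Multiset.sum_replicate, Prod.ext_iff]
      omega
    · simp
  · rintro ⟨h0, hs, e, he, hae⟩
    have hl : l = e ::ₘ l.erase e := (Multiset.cons_erase he).symm
    set t := l.erase e with ht
    have h0t : (0 : ℕ × ℕ) ∉ t := fun h => h0 (Multiset.mem_of_mem_erase h)
    have hsum : e.1 + t.sum.1 = j ∧ e.2 + t.sum.2 = r := by
      have : l.sum = e + t.sum := by rw [hl]; simp
      rw [this] at hs
      constructor <;> [exact congrArg Prod.fst hs; exact congrArg Prod.snd hs]
    have h1 : Refines (Multiset.replicate (e.1 - a) (1,0) +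
        ((a, 0) ::ₘ Multiset.replicate e.2 (0,1))) {e} := by
      have hne : Multiset.replicate (e.1 - a) ((1,0) : ℕ × ℕ) +
          ((a, 0) ::ₘ Multiset.replicate e.2 (0,1)) ≠ 0 := by
        intro h
        have := congrArg Multiset.card h
        simp at this
      have hss : (Multiset.replicate (e.1 - a) ((1,0) : ℕ × ℕ) +
          ((a, 0) ::ₘ Multiset.replicate e.2 (0,1))).sum = e := by
        simp [Multiset.sum_replicate, Prod.ext_iff]
        omega
      have := refines_sum_singleton hne
      rwa [hss] at this
    have h2 := h1.add (refines_gen h0t)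
    have hje : j - a = (e.1 - a) + t.sum.1 := by omega
    have hre : r = e.2 + t.sum.2 := by omega
    have heq : (Multiset.replicate (e.1 - a) ((1,0) : ℕ×ℕ) +
          ((a, 0) ::ₘ Multiset.replicate e.2 (0,1))) +
        (Multiset.replicate t.sum.1 (1,0) + Multiset.replicate t.sum.2 (0,1)) =
        Multiset.replicate (j - a) (1,0) + ((a, 0) ::ₘ Multiset.replicate r (0,1)) := by
      rw [hje, hre, Multiset.replicate_add, Multiset.replicate_add]
      simp only [← Multiset.singleton_add]
      abel
    rw [heq] at h2
    rw [hl]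
    simpa [Multiset.singleton_add] using h2

/-- The monoid homomorphism `(p, q) ↦ p + b * q`. -/
def phiHom (b : ℕ) : ℕ × ℕ →+ ℕ where
  toFun e := e.1 + b * e.2
  map_zero' := by simp
  map_add' x y := by simp [Prod.fst_add, Prod.snd_add]; ring

@[simp] lemma phiHom_apply (b : ℕ) (e : ℕ × ℕ) : phiHom b e = e.1 + b * e.2 := rfl

lemma psi_phi {b : ℕ} (hb : 0 < b) {l : Multiset (ℕ × ℕ)} (h : ∀ e ∈ l, e.1 < b) :
    (l.map (phiHom b)).map (fun n => (n % b, n / b)) = l := by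
  rw [Multiset.map_map]
  have : Multiset.map ((fun n => (n % b, n / b)) ∘ (phiHom b)) l
      = Multiset.map (fun x => x) l := by
    refine Multiset.map_congr rfl ?_
    intro e he
    have hlt := h e he
    simp only [Function.comp_apply, phiHom_apply]
    refine Prod.ext ?_ ?_
    · simp [Nat.add_mul_mod_self_left, Nat.mod_eq_of_lt hlt]
    · simp [Nat.add_mul_div_left _ _ hb, Nat.div_eq_of_lt hlt]
  rw [this, Multiset.map_id']

lemma preimage_unique {b : ℕ} (hb : 0 < b) {l' l'' : Multiset (ℕ × ℕ)}
    (hlt : ∀ e ∈ l', e.1 < b) (hs : l''.sum.1 = l'.sum.1)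
    (hm : l''.map (phiHom b) = l'.map (phiHom b)) : l'' = l' := by
  have hphi : ∀ e : ℕ × ℕ, (phiHom b) e % b = e.1 % b := by
    intro e; simp [Nat.add_mul_mod_self_left]
  have key : ∀ e ∈ l'', e.1 < b := by
    have e1 : (l''.map (fun e => e.1 % b)).sum = (l''.map (fun e => e.1)).sum := by
      have c1 : (l''.map (fun e => e.1 % b)).sum = (l'.map (fun e => e.1 % b)).sum := by
        have : ∀ l : Multiset (ℕ × ℕ), (l.map (fun e => e.1 % b)).sum
            = ((l.map (phiHom b)).map (fun n => n % b)).sum := by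
          intro l
          rw [Multiset.map_map]
          congr 1
          exact Multiset.map_congr rfl (fun e _ => (hphi e).symm)
        rw [this, this, hm]
      have c2 : (l'.map (fun e => e.1 % b)).sum = (l'.map (fun e => e.1)).sum := by
        refine congrArg Multiset.sum (Multiset.map_congr rfl ?_)
        intro e he
        exact Nat.mod_eq_of_lt (hlt e he)
      have c3 : (l'.map (fun e => e.1)).sum = (l''.map (fun e => e.1)).sum := by
        calc (l'.map (fun e => e.1)).sum = l'.sum.1 := (sumFst l').symm
          _ = l''.sum.1 := hs.symm
          _ = (l''.map (fun e => e.1)).sum := sumFst l''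
      rw [c1, c2, c3]
    have split : (l''.map (fun e => e.1)).sum
        = (l''.map (fun e => e.1 % b)).sum + (l''.map (fun e => e.1 - e.1 % b)).sum := by
      rw [← Multiset.sum_map_add]
      refine congrArg Multiset.sum (Multiset.map_congr rfl ?_)
      intro e _
      have := Nat.mod_le e.1 b
      omega
    have hz : (l''.map (fun e => e.1 - e.1 % b)).sum = 0 := by omega
    intro e he
    have := Multiset.sum_eq_zero_iff.1 hz (e.1 - e.1 % b) (Multiset.mem_map_of_mem _ he)
    have hmlt : e.1 % b < b := Nat.mod_lt _ hb
    omega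
  calc l'' = (l''.map (phiHom b)).map (fun n => (n % b, n / b)) := (psi_phi hb key).symm
    _ = (l'.map (phiHom b)).map (fun n => (n % b, n / b)) := by rw [hm]
    _ = l' := psi_phi hb hlt

end pairs
section mp
open Multiset

lemma multPartition_map {α β : Type*} (f : α → β) (s : Multiset α)
    (h : Set.InjOn f {x | x ∈ s}) : multPartition (s.map f) = multPartition s := by
  letI : DecidableEq α := Classical.decEq α
  letI : DecidableEq β := Classical.decEq β
  have hded : (s.map f).dedup = s.dedup.map f := by
    have hn1 : ((s.map f).dedup).Nodup := Multiset.nodup_dedup _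
    have hn2 : (s.dedup.map f).Nodup := by
      refine Multiset.Nodup.map_on ?_ (Multiset.nodup_dedup s)
      intro x hx y hy hxy
      exact h (Multiset.mem_dedup.1 hx) (Multiset.mem_dedup.1 hy) hxy
    rw [Multiset.Nodup.ext hn1 hn2]
    intro y
    simp [Multiset.mem_dedup]
  show (s.map f).dedup.map (fun y => (s.map f).count y) = s.dedup.map fun x => s.count x
  rw [hded, Multiset.map_map]
  refine Multiset.map_congr rfl ?_
  intro x hx
  have hxs : x ∈ s := Multiset.mem_dedup.1 hx
  simp only [Function.comp_apply]
  rw [Multiset.count_map]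
  have hfil : s.filter (fun a => f x = f a) = s.filter (fun a => x = a) := by
    refine Multiset.filter_congr ?_
    intro y hy
    constructor
    · intro hxy; exact h hxs hy hxy
    · rintro rfl; rfl
  rw [hfil]
  rw [← Multiset.countP_eq_card_filter]
  simp [Multiset.count]

lemma finite_sum_set (j r : ℕ) :
    {l : Multiset (ℕ × ℕ) | (0 : ℕ × ℕ) ∉ l ∧ l.sum = (j, r)}.Finite := by
  classical
  set F : Finset (ℕ × ℕ) := Finset.range (j+1) ×ˢ Finset.range (r+1) with hF
  set μ0 : Multiset (ℕ × ℕ) := (j + r) • F.val with hμ0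
  have hfin : {l : Multiset (ℕ × ℕ) | l ≤ μ0}.Finite := by
    refine Set.Finite.ofFinset μ0.powerset.toFinset ?_
    intro l
    simp [Multiset.mem_powerset]
  refine hfin.subset ?_
  rintro l ⟨h0, hs⟩
  have hcard : Multiset.card l ≤ j + r := by
    have h1 : Multiset.card l = (l.map (fun _ => (1 : ℕ))).sum := by
      simp [Multiset.map_const', Multiset.sum_replicate]
    have h2 : (l.map (fun _ => (1 : ℕ))).sum ≤ (l.map (fun e => e.1 + e.2)).sum := by
      refine Multiset.sum_map_le_sum_map _ _ ?_
      intro e he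
      have : e ≠ 0 := fun h => h0 (h ▸ he)
      have : e.1 ≠ 0 ∨ e.2 ≠ 0 := by
        by_contra hc
        push_neg at hc
        exact this (Prod.ext hc.1 hc.2)
      omega
    have h3 : (l.map (fun e => e.1 + e.2)).sum = j + r := by
      rw [Multiset.sum_map_add]
      rw [← sumFst, ← sumSnd, hs]
    omega
  show l ≤ μ0
  rw [Multiset.le_iff_count]
  intro e
  by_cases he : e ∈ l
  · have hmem : e ∈ F := by
      have hle : e ≤ l.sum := Multiset.single_le_sum (fun x _ => _root_.zero_le) e he
      rw [hs] at hle
      rw [hF, Finset.mem_product, Finset.mem_range, Finset.mem_range]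
      exact ⟨Nat.lt_succ_of_le hle.1, Nat.lt_succ_of_le hle.2⟩
    have h1 : Multiset.count e l ≤ j + r := le_trans (Multiset.count_le_card e l) hcard
    have h2 : Multiset.count e μ0 = (j + r) * Multiset.count e F.val := by
      rw [hμ0, Multiset.count_nsmul]
    rw [h2, Multiset.count_eq_one_of_mem F.nodup hmem]
    omega
  · simp [Multiset.count_eq_zero_of_notMem he]

end mp
theorem stmt4 (a b j r : ℕ) (ha : 1 < a) (hab : a ≤ b) (hj : a ≤ j)
    {A : Type*} [AddCommGroup A] (W : Multiset ℕ → A) :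
    (∑ᶠ lam ∈ {lam : Multiset ℕ |
        Refines (Multiset.replicate (j - a) 1 + (a ::ₘ Multiset.replicate r b)) lam},
      W (multPartition lam))
    - (∑ᶠ lam ∈ {lam : Multiset ℕ |
        Refines (Multiset.replicate j 1 + Multiset.replicate r b) lam},
      W (multPartition lam))
    = (∑ᶠ lam ∈ {lam : Multiset (ℕ × ℕ) |
        Refines (Multiset.replicate (j - a) (1, 0) +
          ((a, 0) ::ₘ Multiset.replicate r (0, 1))) lam},
      W (multPartition lam))
    - (∑ᶠ lam ∈ {lam : Multiset (ℕ × ℕ) |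
        Refines (Multiset.replicate j (1, 0) + Multiset.replicate r (0, 1)) lam},
      W (multPartition lam)) := by
  classical
  have ha0 : 0 < a := by omega
  have hb : 0 < b := by omega
  set T1 : Set (Multiset (ℕ × ℕ)) :=
    {lam | Refines (Multiset.replicate j (1, 0) + Multiset.replicate r (0, 1)) lam} with hT1
  set T2 : Set (Multiset (ℕ × ℕ)) :=
    {lam | Refines (Multiset.replicate (j - a) (1, 0) +
      ((a, 0) ::ₘ Multiset.replicate r (0, 1))) lam} with hT2
  set S1 : Set (Multiset ℕ) :=
    {lam | Refines (Multiset.replicate j 1 + Multiset.replicate r b) lam} with hS1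
  set S2 : Set (Multiset ℕ) :=
    {lam | Refines (Multiset.replicate (j - a) 1 + (a ::ₘ Multiset.replicate r b)) lam} with hS2
  have hT1m : ∀ l, l ∈ T1 ↔ ((0 : ℕ × ℕ) ∉ l ∧ l.sum = (j, r)) := fun l => refines_xy_iff
  have hT2m : ∀ l, l ∈ T2 ↔ ((0 : ℕ × ℕ) ∉ l ∧ l.sum = (j, r) ∧ ∃ e ∈ l, a ≤ e.1) :=
    fun l => refines_axy_iff ha0 hj
  have hmap1 : (Multiset.replicate j ((1, 0) : ℕ × ℕ) +
      Multiset.replicate r (0, 1)).map (phiHom b)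
      = Multiset.replicate j 1 + Multiset.replicate r b := by
    simp [Multiset.map_replicate]
  have hmap2 : (Multiset.replicate (j - a) ((1, 0) : ℕ × ℕ) +
      ((a, 0) ::ₘ Multiset.replicate r (0, 1))).map (phiHom b)
      = Multiset.replicate (j - a) 1 + (a ::ₘ Multiset.replicate r b) := by
    simp [Multiset.map_replicate]
  have hS1m : ∀ l, l ∈ S1 ↔ ∃ l' ∈ T1, l'.map (phiHom b) = l := by
    intro l
    constructor
    · intro h
      have h' : Refines ((Multiset.replicate j ((1, 0) : ℕ × ℕ) +
          Multiset.replicate r (0, 1)).map (phiHom b)) l := by rwa [hmap1]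
      obtain ⟨l', h1, h2⟩ := refines_lift _ h'
      exact ⟨l', h1, h2⟩
    · rintro ⟨l', h1, rfl⟩
      have := refines_map (phiHom b) h1
      rwa [hmap1] at this
  have hS2m : ∀ l, l ∈ S2 ↔ ∃ l' ∈ T2, l'.map (phiHom b) = l := by
    intro l
    constructor
    · intro h
      have h' : Refines ((Multiset.replicate (j - a) ((1, 0) : ℕ × ℕ) +
          ((a, 0) ::ₘ Multiset.replicate r (0, 1))).map (phiHom b)) l := by rwa [hmap2]
      obtain ⟨l', h1, h2⟩ := refines_lift _ h'
      exact ⟨l', h1, h2⟩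
    · rintro ⟨l', h1, rfl⟩
      have := refines_map (phiHom b) h1
      rwa [hmap2] at this
  have hT1fin : T1.Finite := (finite_sum_set j r).subset (fun l hl => (hT1m l).1 hl)
  have hT2sub : T2 ⊆ T1 := by
    intro l hl
    rcases (hT2m l).1 hl with ⟨h0, hs, _⟩
    exact (hT1m l).2 ⟨h0, hs⟩
  have hT2fin : T2.Finite := hT1fin.subset hT2sub
  have hS1fin : S1.Finite := by
    have himg : S1 = (fun l => l.map (phiHom b)) '' T1 := by
      ext l
      rw [hS1m l]
      constructor
      · rintro ⟨l', h1, h2⟩; exact ⟨l', h1, h2⟩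
      · rintro ⟨l', h1, h2⟩; exact ⟨l', h1, h2⟩
    rw [himg]
    exact hT1fin.image _
  have hS2sub : S2 ⊆ S1 := by
    intro l hl
    rcases (hS2m l).1 hl with ⟨l', hl', rfl⟩
    exact (hS1m _).2 ⟨l', hT2sub hl', rfl⟩
  have hS2fin : S2.Finite := hS1fin.subset hS2sub
  have hlt : ∀ l ∈ T1, l ∉ T2 → ∀ e ∈ l, e.1 < a := by
    intro l h1 h2 e he
    by_contra hge
    exact h2 ((hT2m l).2 ⟨((hT1m l).1 h1).1, ((hT1m l).1 h1).2, e, he, le_of_not_gt hge⟩)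
  have hltb : ∀ l ∈ T1, l ∉ T2 → ∀ e ∈ l, e.1 < b :=
    fun l h1 h2 e he => lt_of_lt_of_le (hlt l h1 h2 e he) hab
  have hinj : ∀ l ∈ T1, l ∉ T2 → Set.InjOn (phiHom b) {x | x ∈ l} := by
    intro l h1 h2 x hx y hy hxy
    have hx' : x.1 < b := hltb l h1 h2 x hx
    have hy' : y.1 < b := hltb l h1 h2 y hy
    simp only [phiHom_apply] at hxy
    have e1 : x.1 = y.1 := by
      have : x.1 % b = y.1 % b := by
        rw [← Nat.add_mul_mod_self_left x.1 b x.2, hxy, Nat.add_mul_mod_self_left]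
      rwa [Nat.mod_eq_of_lt hx', Nat.mod_eq_of_lt hy'] at this
    have e2 : x.2 = y.2 := by
      rw [e1] at hxy
      have : b * x.2 = b * y.2 := by omega
      exact Nat.eq_of_mul_eq_mul_left hb this
    exact Prod.ext e1 e2
  -- reduce to finset sums
  rw [finsum_mem_eq_finite_toFinset_sum _ hS2fin, finsum_mem_eq_finite_toFinset_sum _ hS1fin,
      finsum_mem_eq_finite_toFinset_sum _ hT2fin, finsum_mem_eq_finite_toFinset_sum _ hT1fin]
  have hsub1 : hS2fin.toFinset ⊆ hS1fin.toFinset := by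
    intro l hl
    rw [Set.Finite.mem_toFinset] at *
    exact hS2sub hl
  have hsub2 : hT2fin.toFinset ⊆ hT1fin.toFinset := by
    intro l hl
    rw [Set.Finite.mem_toFinset] at *
    exact hT2sub hl
  have key : ∑ l ∈ hT1fin.toFinset \ hT2fin.toFinset, W (multPartition l)
      = ∑ l ∈ hS1fin.toFinset \ hS2fin.toFinset, W (multPartition l) := by
    have memT : ∀ l, l ∈ hT1fin.toFinset \ hT2fin.toFinset ↔ (l ∈ T1 ∧ l ∉ T2) := by
      intro l
      simp [Finset.mem_sdiff, Set.Finite.mem_toFinset]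
    have memS : ∀ l, l ∈ hS1fin.toFinset \ hS2fin.toFinset ↔ (l ∈ S1 ∧ l ∉ S2) := by
      intro l
      simp [Finset.mem_sdiff, Set.Finite.mem_toFinset]
    -- forward map lands correctly
    have hi : ∀ l, (l ∈ T1 ∧ l ∉ T2) → (l.map (phiHom b) ∈ S1 ∧ l.map (phiHom b) ∉ S2) := by
      rintro l ⟨h1, h2⟩
      refine ⟨(hS1m _).2 ⟨l, h1, rfl⟩, ?_⟩
      intro hc
      rcases (hS2m _).1 hc with ⟨l'', hl'', hmapeq⟩
      have hs1 : l''.sum.1 = l.sum.1 := by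
        rw [((hT2m l'').1 hl'').2.1, ((hT1m l).1 h1).2]
      have : l'' = l := preimage_unique hb (hltb l h1 h2) hs1 hmapeq
      exact h2 (this ▸ hl'')
    -- backward map
    have hj' : ∀ l, (l ∈ S1 ∧ l ∉ S2) →
        ∃ l', (l' ∈ T1 ∧ l' ∉ T2) ∧ l'.map (phiHom b) = l ∧
          l.map (fun n => (n % b, n / b)) = l' := by
      rintro l ⟨h1, h2⟩
      rcases (hS1m l).1 h1 with ⟨l', hl', rfl⟩
      have hl'2 : l' ∉ T2 := fun hc => h2 ((hS2m _).2 ⟨l', hc, rfl⟩)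
      exact ⟨l', ⟨hl', hl'2⟩, rfl, psi_phi hb (hltb l' hl' hl'2)⟩
    refine Finset.sum_bij' (i := fun l _ => l.map (phiHom b))
      (j := fun l _ => l.map (fun n => (n % b, n / b))) ?_ ?_ ?_ ?_ ?_
    · intro l hl
      rw [memS]
      exact hi l ((memT l).1 hl)
    · intro l hl
      obtain ⟨l', hl', _, hpsi⟩ := hj' l ((memS l).1 hl)
      refine (memT _).2 ?_
      show Multiset.map (fun n => (n % b, n / b)) l ∈ T1 ∧
        Multiset.map (fun n => (n % b, n / b)) l ∉ T2
      rw [hpsi]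
      exact hl'
    · intro l hl
      exact psi_phi hb (hltb l ((memT l).1 hl).1 ((memT l).1 hl).2)
    · intro l hl
      obtain ⟨l', _, hphi, hpsi⟩ := hj' l ((memS l).1 hl)
      show Multiset.map (⇑(phiHom b)) (Multiset.map (fun n => (n % b, n / b)) l) = l
      rw [hpsi, hphi]
    · intro l hl
      have := multPartition_map (phiHom b) l (hinj l ((memT l).1 hl).1 ((memT l).1 hl).2)
      rw [this]
  have e1 := Finset.sum_sdiff_eq_sub (f := fun l => W (multPartition l)) hsub1
  have e2 := Finset.sum_sdiff_eq_sub (f := fun l => W (multPartition l)) hsub2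
  calc (∑ l ∈ hS2fin.toFinset, W (multPartition l))
        - ∑ l ∈ hS1fin.toFinset, W (multPartition l)
      = -((∑ l ∈ hS1fin.toFinset, W (multPartition l))
        - ∑ l ∈ hS2fin.toFinset, W (multPartition l)) := by abel
    _ = -(∑ l ∈ hS1fin.toFinset \ hS2fin.toFinset, W (multPartition l)) := by rw [e1]
    _ = -(∑ l ∈ hT1fin.toFinset \ hT2fin.toFinset, W (multPartition l)) := by rw [key]
    _ = -((∑ l ∈ hT1fin.toFinset, W (multPartition l))
        - ∑ l ∈ hT2fin.toFinset, W (multPartition l)) := by rw [e2]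
    _ = (∑ l ∈ hT2fin.toFinset, W (multPartition l))
        - ∑ l ∈ hT1fin.toFinset, W (multPartition l) := by abel
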